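/- For s = 2 and indeterminates τ, x₁, x₂, y₁, y₂, the following identity of rational functions holds: ∑ over the four pairs (σ,ρ) ∈ S₂×S₂ of sgn(σ)sgn(ρ) · (x_{σ(1)}y_{ρ(1)}) / ((1 − x_{σ(1)}y_{ρ(1)})(1 − x_{σ(1)}x_{σ(2)}y_{ρ(1)}y_{ρ(2)})) · (x_{σ(1)}x_{σ(2)} + τ x_{σ(2)} + 1)(y_{ρ(1)}y_{ρ(2)} + τ y_{ρ(2)} + 1) equals ∏_{j,k=1}^{2} (x_j + y_k + τ x_j y_k) · ( ψ(x₁,y₁)ψ(x₂,y₂) − ψ(x₁,y₂)ψ(x₂,y₁) ), where ψ(x,y) = 1/((1 − xy)(x + y + τxy)). -/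
import Mathlib


/-- The `s = 2` case of the double antisymmetrization identity of
Cantini–Colomo–Pronko, with `ψ(x,y) = 1/((1-xy)(x+y+τxy))`. -/
theorem stmt7 (F : Type*) [Field F] (τ x₁ x₂ y₁ y₂ : F)
    (h11 : 1 - x₁ * y₁ ≠ 0) (h12 : 1 - x₁ * y₂ ≠ 0)
    (h21 : 1 - x₂ * y₁ ≠ 0) (h22 : 1 - x₂ * y₂ ≠ 0)
    (hp : 1 - x₁ * x₂ * y₁ * y₂ ≠ 0)
    (g11 : x₁ + y₁ + τ * x₁ * y₁ ≠ 0) (g12 : x₁ + y₂ + τ * x₁ * y₂ ≠ 0)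
    (g21 : x₂ + y₁ + τ * x₂ * y₁ ≠ 0) (g22 : x₂ + y₂ + τ * x₂ * y₂ ≠ 0) :
    x₁ * y₁ / ((1 - x₁ * y₁) * (1 - x₁ * x₂ * y₁ * y₂)) *
        ((x₁ * x₂ + τ * x₂ + 1) * (y₁ * y₂ + τ * y₂ + 1)) -
      x₂ * y₁ / ((1 - x₂ * y₁) * (1 - x₁ * x₂ * y₁ * y₂)) *
        ((x₂ * x₁ + τ * x₁ + 1) * (y₁ * y₂ + τ * y₂ + 1)) -
      x₁ * y₂ / ((1 - x₁ * y₂) * (1 - x₁ * x₂ * y₁ * y₂)) *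
        ((x₁ * x₂ + τ * x₂ + 1) * (y₂ * y₁ + τ * y₁ + 1)) +
      x₂ * y₂ / ((1 - x₂ * y₂) * (1 - x₁ * x₂ * y₁ * y₂)) *
        ((x₂ * x₁ + τ * x₁ + 1) * (y₂ * y₁ + τ * y₁ + 1)) =
      ((x₁ + y₁ + τ * x₁ * y₁) * (x₁ + y₂ + τ * x₁ * y₂) *
        (x₂ + y₁ + τ * x₂ * y₁) * (x₂ + y₂ + τ * x₂ * y₂)) *
        (((1 - x₁ * y₁) * (x₁ + y₁ + τ * x₁ * y₁))⁻¹ *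
            ((1 - x₂ * y₂) * (x₂ + y₂ + τ * x₂ * y₂))⁻¹ -
          ((1 - x₁ * y₂) * (x₁ + y₂ + τ * x₁ * y₂))⁻¹ *
            ((1 - x₂ * y₁) * (x₂ + y₁ + τ * x₂ * y₁))⁻¹) := by
  have e1 : x₁ * y₁ / ((1 - x₁ * y₁) * (1 - x₁ * x₂ * y₁ * y₂)) *
        ((x₁ * x₂ + τ * x₂ + 1) * (y₁ * y₂ + τ * y₂ + 1)) +
      x₂ * y₂ / ((1 - x₂ * y₂) * (1 - x₁ * x₂ * y₁ * y₂)) *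
        ((x₂ * x₁ + τ * x₁ + 1) * (y₂ * y₁ + τ * y₁ + 1)) =
      ((x₁ + y₂ + τ * x₁ * y₂) * (x₂ + y₁ + τ * x₂ * y₁)) /
          ((1 - x₁ * y₁) * (1 - x₂ * y₂)) +
        (-(y₁ * y₂) - x₁ * x₂ - 2 * (x₁ * x₂ * y₁ * y₂) + τ ^ 2 * (x₁ * x₂ * y₁ * y₂)) /
          (1 - x₁ * x₂ * y₁ * y₂) := by
    rw [div_mul_eq_mul_div, div_mul_eq_mul_div,
      div_add_div _ _ (mul_ne_zero h11 hp) (mul_ne_zero h22 hp),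
      div_add_div _ _ (mul_ne_zero h11 h22) hp,
      div_eq_div_iff (mul_ne_zero (mul_ne_zero h11 hp) (mul_ne_zero h22 hp))
        (mul_ne_zero (mul_ne_zero h11 h22) hp)]
    ring
  have e2 : x₂ * y₁ / ((1 - x₂ * y₁) * (1 - x₁ * x₂ * y₁ * y₂)) *
        ((x₂ * x₁ + τ * x₁ + 1) * (y₁ * y₂ + τ * y₂ + 1)) +
      x₁ * y₂ / ((1 - x₁ * y₂) * (1 - x₁ * x₂ * y₁ * y₂)) *
        ((x₁ * x₂ + τ * x₂ + 1) * (y₂ * y₁ + τ * y₁ + 1)) =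
      ((x₁ + y₁ + τ * x₁ * y₁) * (x₂ + y₂ + τ * x₂ * y₂)) /
          ((1 - x₁ * y₂) * (1 - x₂ * y₁)) +
        (-(y₁ * y₂) - x₁ * x₂ - 2 * (x₁ * x₂ * y₁ * y₂) + τ ^ 2 * (x₁ * x₂ * y₁ * y₂)) /
          (1 - x₁ * x₂ * y₁ * y₂) := by
    rw [div_mul_eq_mul_div, div_mul_eq_mul_div,
      div_add_div _ _ (mul_ne_zero h21 hp) (mul_ne_zero h12 hp),
      div_add_div _ _ (mul_ne_zero h12 h21) hp,
      div_eq_div_iff (mul_ne_zero (mul_ne_zero h21 hp) (mul_ne_zero h12 hp))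
        (mul_ne_zero (mul_ne_zero h12 h21) hp)]
    ring
  have e3 : ((x₁ + y₁ + τ * x₁ * y₁) * (x₁ + y₂ + τ * x₁ * y₂) *
        (x₂ + y₁ + τ * x₂ * y₁) * (x₂ + y₂ + τ * x₂ * y₂)) *
        (((1 - x₁ * y₁) * (x₁ + y₁ + τ * x₁ * y₁))⁻¹ *
            ((1 - x₂ * y₂) * (x₂ + y₂ + τ * x₂ * y₂))⁻¹ -
          ((1 - x₁ * y₂) * (x₁ + y₂ + τ * x₁ * y₂))⁻¹ *
            ((1 - x₂ * y₁) * (x₂ + y₁ + τ * x₂ * y₁))⁻¹) =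
      ((x₁ + y₂ + τ * x₁ * y₂) * (x₂ + y₁ + τ * x₂ * y₁)) /
          ((1 - x₁ * y₁) * (1 - x₂ * y₂)) -
        ((x₁ + y₁ + τ * x₁ * y₁) * (x₂ + y₂ + τ * x₂ * y₂)) /
          ((1 - x₁ * y₂) * (1 - x₂ * y₁)) := by
    have hA : ((x₁ + y₁ + τ * x₁ * y₁) * (x₁ + y₂ + τ * x₁ * y₂) *
          (x₂ + y₁ + τ * x₂ * y₁) * (x₂ + y₂ + τ * x₂ * y₂)) *
          (((1 - x₁ * y₁) * (x₁ + y₁ + τ * x₁ * y₁))⁻¹ *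
            ((1 - x₂ * y₂) * (x₂ + y₂ + τ * x₂ * y₂))⁻¹) =
        ((x₁ + y₂ + τ * x₁ * y₂) * (x₂ + y₁ + τ * x₂ * y₁)) /
          ((1 - x₁ * y₁) * (1 - x₂ * y₂)) := by
      rw [← mul_inv, ← div_eq_mul_inv,
        div_eq_div_iff (mul_ne_zero (mul_ne_zero h11 g11) (mul_ne_zero h22 g22))
          (mul_ne_zero h11 h22)]
      ring
    have hB : ((x₁ + y₁ + τ * x₁ * y₁) * (x₁ + y₂ + τ * x₁ * y₂) *
          (x₂ + y₁ + τ * x₂ * y₁) * (x₂ + y₂ + τ * x₂ * y₂)) *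
          (((1 - x₁ * y₂) * (x₁ + y₂ + τ * x₁ * y₂))⁻¹ *
            ((1 - x₂ * y₁) * (x₂ + y₁ + τ * x₂ * y₁))⁻¹) =
        ((x₁ + y₁ + τ * x₁ * y₁) * (x₂ + y₂ + τ * x₂ * y₂)) /
          ((1 - x₁ * y₂) * (1 - x₂ * y₁)) := by
      rw [← mul_inv, ← div_eq_mul_inv,
        div_eq_div_iff (mul_ne_zero (mul_ne_zero h12 g12) (mul_ne_zero h21 g21))
          (mul_ne_zero h12 h21)]
      ring
    rw [mul_sub, hA, hB]
  linear_combination e1 - e2 - e3
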